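/- Let H be a real inner product space, a : H × H → ℝ a symmetric positive semidefinite bilinear form with a(v,v) ≥ λ₁·‖v‖² for all v ∈ H for some λ₁ > 0, and b : H × H × H → ℝ a trilinear map with b(u,v,v) = 0 for all u, v ∈ H. Let μ, γ, δ, k > 0, set t_i = i·k, let f^1, …, f^N ∈ H with ‖f^n‖ ≤ F for all n, and let U^0, …, U^N ∈ H satisfy, for every 1 ≤ n ≤ N and every φ ∈ H, ⟨(U^n − U^{n−1})/k, φ⟩ + μ·a(U^n, φ) + a( k·∑_{j=1}^{n} γ·e^{−δ(t_n−t_j)}·U^j, φ ) + b(U^n, U^n, φ) = ⟨f^n, φ⟩. Then for every α with 0 < α < min{δ, μλ₁/2} and e^{αk} ≤ 1 + (μλ₁/2)·k, and every 1 ≤ n ≤ N: ‖U^n‖² + (μ/2)·e^{−αk}·e^{−2α t_n}·k·∑_{i=1}^{n} e^{2α t_i}·a(U^i, U^i) ≤ e^{−2α t_n}·‖U^0‖² + (e^{αk}/(α·μ·λ₁))·F². -/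

import Mathlib

open scoped RealInnerProductSpace

private lemma tele_sum (g : ℕ → ℝ) (m : ℕ) :
    ∑ i ∈ Finset.Icc 1 m, (g i - g (i - 1)) = g m - g 0 := by
  induction m with
  | zero => simp
  | succ m ih =>
      rw [Finset.sum_Icc_succ_top (Nat.le_add_left 1 m), ih]
      simp

private lemma geom_sum_le (z : ℝ) (hz : 1 < z) (m : ℕ) :
    ∑ i ∈ Finset.Icc 1 m, z ^ i ≤ z ^ (m + 1) / (z - 1) := by
  have hz0 : 0 < z - 1 := by linarith
  have hzp : 0 < z := by linarith
  have hne : z - 1 ≠ 0 := ne_of_gt hz0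
  induction m with
  | zero =>
      rw [Finset.Icc_eq_empty (by omega)]
      simp
      positivity
  | succ m ih =>
      rw [Finset.sum_Icc_succ_top (Nat.le_add_left 1 m)]
      have he : z ^ (m+1) / (z-1) + z ^ (m+1) = z ^ (m+1+1) / (z-1) := by
        field_simp
        ring
      linarith

private lemma step_scalar (μ L k F x y X Y A P G : ℝ)
    (hμ : 0 < μ) (hL : 0 < L) (hk : 0 < k) (hF : 0 ≤ F)
    (hx : 1 ≤ x) (hxy : x * y = 1) (hs : x ≤ 1 + μ * L / 2 * k)
    (hX : 0 ≤ X) (hY : 0 ≤ Y) (hA : L * Y ^ 2 ≤ A) (hG : μ * L * G = F ^ 2)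
    (hstar : Y ^ 2 + k * (μ * A) + k * P ≤ X * Y + k * (F * Y)) :
    x ^ 2 * Y ^ 2 + μ * y / 2 * k * (x ^ 2 * A) + 2 * k * y * (x ^ 2 * P)
      ≤ X ^ 2 + k * (x * (x + 1) * G) := by
  have hx0 : (0:ℝ) < x := lt_of_lt_of_le one_pos hx
  have hxp : (0:ℝ) < x + 1 := by linarith
  have e1 : μ * y / 2 * k * (x ^ 2 * A) = μ * k * A * x / 2 := by
    linear_combination (μ * k * A * x / 2) * hxy
  have e2 : 2 * k * y * (x ^ 2 * P) = 2 * k * x * P := by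
    linear_combination (2 * k * x * P) * hxy
  rw [e1, e2]
  have hP : k * P ≤ X * Y + k * (F * Y) - Y ^ 2 - k * (μ * A) := by linarith
  have hP2 : 2 * k * x * P ≤ 2 * x * (X * Y + k * (F * Y) - Y ^ 2 - k * (μ * A)) := by
    have := mul_le_mul_of_nonneg_left hP (by positivity : (0:ℝ) ≤ 2 * x)
    linarith
  have hQkey : μ * L * (μ * L * Y ^ 2 + (x+1)^2 * G - 2 * (x+1) * (F * Y))
      = (μ * L * Y - (x+1) * F)^2 := by
    linear_combination (x+1)^2 * hG
  have hQ : 0 ≤ μ * L * Y ^ 2 + (x+1)^2 * G - 2 * (x+1) * (F * Y) := by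
    have h0 : 0 ≤ μ * L * (μ * L * Y ^ 2 + (x+1)^2 * G - 2 * (x+1) * (F * Y)) := by
      rw [hQkey]; positivity
    have heq : μ * L * Y ^ 2 + (x+1)^2 * G - 2 * (x+1) * (F * Y)
        = μ * L * (μ * L * Y ^ 2 + (x+1)^2 * G - 2 * (x+1) * (F * Y)) / (μ * L) := by
      field_simp
    rw [heq]
    exact div_nonneg h0 (by positivity)
  have r1 : 0 ≤ (x+1) * (x * Y - X)^2 := by positivity
  have r2 : 0 ≤ (k * x) * (μ * L * Y ^ 2 + (x+1)^2 * G - 2 * (x+1) * (F * Y)) :=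
    mul_nonneg (by positivity) hQ
  have r4 : 0 ≤ μ * k * x * (x+1) * (A - L * Y^2) := by
    apply mul_nonneg (by positivity) (by linarith)
  have r3 : 0 ≤ (μ * L * k - (2*x - 2)) * (x * ((3*x+1) * Y^2)) := by
    apply mul_nonneg (by linarith) (by positivity)
  have r5 : 0 ≤ x * (x-1)^2 * Y^2 := by positivity
  have main : (x+1) * (x^2*Y^2 + μ*k*A*x/2 + 2*x*(X*Y + k*(F*Y) - Y^2 - k*(μ*A)))
      ≤ (x+1) * (X^2 + k*(x*(x+1)*G)) := by linarith [r1, r2, r4, r3, r5]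
  have step := le_of_mul_le_mul_left main hxp
  linarith

private lemma psd_sum {H : Type*} [NormedAddCommGroup H] [InnerProductSpace ℝ H]
    (B : H →ₗ[ℝ] H →ₗ[ℝ] ℝ) (hsymm : ∀ u v, B u v = B v u)
    (hpos : ∀ v, 0 ≤ B v v) (r : ℝ) (hr0 : 0 ≤ r) (hr1 : r ≤ 1)
    (V : ℕ → H) (m : ℕ) :
    0 ≤ ∑ i ∈ Finset.Icc 1 m, B (V i) (∑ j ∈ Finset.Icc 1 i, r ^ (i - j) • V j) := by
  set S : ℕ → H := fun i => ∑ j ∈ Finset.Icc 1 i, r ^ (i - j) • V j with hS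
  have hrec : ∀ i : ℕ, S (i + 1) = r • S i + V (i + 1) := by
    intro i
    have h1 : S (i+1) = (∑ j ∈ Finset.Icc 1 i, r ^ (i + 1 - j) • V j) + r ^ (i+1-(i+1)) • V (i+1) := by
      rw [hS]
      exact Finset.sum_Icc_succ_top (Nat.le_add_left 1 i) _
    rw [h1, Nat.sub_self, pow_zero, one_smul]
    congr 1
    rw [Finset.smul_sum]
    apply Finset.sum_congr rfl
    intro j hj
    have hji : j ≤ i := (Finset.mem_Icc.mp hj).2
    rw [show i + 1 - j = (i - j) + 1 from by omega, pow_succ, smul_smul]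
    ring_nf
  suffices h : B (S m) (S m) ≤ 2 * ∑ i ∈ Finset.Icc 1 m, B (V i) (S i) by
    have := hpos (S m); linarith
  induction m with
  | zero =>
      have h0 : S 0 = 0 := by rw [hS]; simp
      rw [Finset.Icc_eq_empty (by omega)]
      simp [h0]
  | succ m ih =>
      rw [Finset.sum_Icc_succ_top (Nat.le_add_left 1 m)]
      have hr' : S (m+1) = r • S m + V (m+1) := hrec m
      have hv : V (m+1) = S (m+1) - r • S m := by rw [hr']; abel
      have key1 : B (V (m+1)) (S (m+1))
          = B (S (m+1)) (S (m+1)) - r * B (S m) (S (m+1)) := by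
        rw [hv, map_sub, map_smul]
        simp [LinearMap.sub_apply, LinearMap.smul_apply, smul_eq_mul]
      have key2 : 2 * B (S m) (S (m+1)) ≤ B (S m) (S m) + B (S (m+1)) (S (m+1)) := by
        have h := hpos (S m - S (m+1))
        have hexp : B (S m - S (m+1)) (S m - S (m+1))
            = B (S m) (S m) - 2 * B (S m) (S (m+1)) + B (S (m+1)) (S (m+1)) := by
          rw [map_sub]
          simp only [LinearMap.sub_apply, map_sub]
          rw [hsymm (S (m+1)) (S m)]
          ring
        rw [hexp] at h
        linarith
      have key3a := hpos (S m)
      have key3b := hpos (S (m+1))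
      have key4 : r * (2 * B (S m) (S (m+1))) ≤ r * (B (S m) (S m) + B (S (m+1)) (S (m+1))) :=
        mul_le_mul_of_nonneg_left key2 hr0
      have key5 : r * (B (S m) (S m) + B (S (m+1)) (S (m+1)))
          ≤ B (S m) (S m) + B (S (m+1)) (S (m+1)) := by
        nlinarith
      linarith [key1, key4, key5, ih]

set_option maxHeartbeats 1000000 in
/-- Abstract form of the stability Lemma 4.1 for the backward Euler scheme
applied to the Oldroyd model. -/
theorem backward_euler_stability
    {H : Type*} [NormedAddCommGroup H] [InnerProductSpace ℝ H]
    (a : H →ₗ[ℝ] H →ₗ[ℝ] ℝ) (lam₁ : ℝ) (hlam₁ : 0 < lam₁)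
    (hsymm : ∀ u v : H, a u v = a v u)
    (hcoer : ∀ v : H, lam₁ * ‖v‖ ^ 2 ≤ a v v)
    (b : H →ₗ[ℝ] H →ₗ[ℝ] H →ₗ[ℝ] ℝ)
    (hb : ∀ u v : H, b u v v = 0)
    (μ γ δ k F : ℝ) (hμ : 0 < μ) (hγ : 0 < γ) (hδ : 0 < δ) (hk : 0 < k)
    (N : ℕ) (f : ℕ → H) (hf : ∀ n : ℕ, 1 ≤ n → n ≤ N → ‖f n‖ ≤ F)
    (U : ℕ → H)
    (scheme : ∀ n : ℕ, 1 ≤ n → n ≤ N → ∀ φ : H,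
      ⟪(1 / k) • (U n - U (n - 1)), φ⟫ + μ * a (U n) φ +
        a (k • ∑ j ∈ Finset.Icc 1 n,
            (γ * Real.exp (-δ * ((n : ℝ) * k - (j : ℝ) * k))) • U j) φ +
        b (U n) (U n) φ = ⟪f n, φ⟫) :
    ∀ α : ℝ, 0 < α → α < min δ (μ * lam₁ / 2) →
      Real.exp (α * k) ≤ 1 + (μ * lam₁ / 2) * k →
      ∀ n : ℕ, 1 ≤ n → n ≤ N →
        ‖U n‖ ^ 2 + (μ / 2) * Real.exp (-α * k) * Real.exp (-2 * α * ((n : ℝ) * k)) *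
            k * ∑ i ∈ Finset.Icc 1 n,
              Real.exp (2 * α * ((i : ℝ) * k)) * a (U i) (U i) ≤
          Real.exp (-2 * α * ((n : ℝ) * k)) * ‖U 0‖ ^ 2 +
            (Real.exp (α * k) / (α * μ * lam₁)) * F ^ 2 := by
  intro α hα0 hαlt hαexp n hn1 hnN
  have hN1 : 1 ≤ N := le_trans hn1 hnN
  have hF0 : 0 ≤ F := le_trans (norm_nonneg (f 1)) (hf 1 le_rfl hN1)
  have hαδ : α < δ := lt_of_lt_of_le hαlt (min_le_left _ _)
  have hαc : α < μ * lam₁ / 2 := lt_of_lt_of_le hαlt (min_le_right _ _)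
  set x : ℝ := Real.exp (α * k) with hxdef
  set y : ℝ := Real.exp (-α * k) with hydef
  have hxy : x * y = 1 := by
    rw [hxdef, hydef, ← Real.exp_add]
    norm_num
  have hx1 : 1 < x := by
    have := Real.add_one_le_exp (α * k)
    have hαk : 0 < α * k := by positivity
    rw [hxdef]; linarith
  have hy0 : 0 < y := Real.exp_pos _
  have hx0 : (0:ℝ) < x := by linarith
  -- weights
  set W : ℕ → ℝ := fun i => Real.exp (2 * α * ((i : ℝ) * k)) with hWdef
  have hWpos : ∀ i, 0 < W i := fun i => Real.exp_pos _
  have hW0 : W 0 = 1 := by simp [hWdef]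
  have hz : x ^ 2 = Real.exp (2 * α * k) := by
    rw [hxdef, sq, ← Real.exp_add]; ring_nf
  have hWpow : ∀ i : ℕ, W i = (x ^ 2) ^ i := by
    intro i
    rw [hz, ← Real.exp_nat_mul]
    show Real.exp (2 * α * ((i : ℝ) * k)) = Real.exp ((i:ℝ) * (2 * α * k))
    congr 1
    ring
  have hWsucc : ∀ i : ℕ, W (i + 1) = x ^ 2 * W i := by
    intro i; rw [hWpow, hWpow, pow_succ]; ring
  set G : ℝ := F ^ 2 / (μ * lam₁) with hGdef
  have hG : μ * lam₁ * G = F ^ 2 := by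
    rw [hGdef]; field_simp
  have hG0 : 0 ≤ G := by rw [hGdef]; positivity
  -- the memory vector
  set Q : ℕ → H := fun i => k • ∑ j ∈ Finset.Icc 1 i,
      (γ * Real.exp (-δ * ((i : ℝ) * k - (j : ℝ) * k))) • U j with hQdef
  have hQi : ∀ i : ℕ, (k • ∑ j ∈ Finset.Icc 1 i,
      (γ * Real.exp (-δ * ((i : ℝ) * k - (j : ℝ) * k))) • U j) = Q i := by
    intro i; rw [hQdef]
  -- the basic energy step inequality
  have hstar : ∀ i : ℕ, 1 ≤ i → i ≤ N →
      ‖U i‖ ^ 2 + k * (μ * a (U i) (U i)) + k * (a (Q i) (U i))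
        ≤ ‖U (i-1)‖ * ‖U i‖ + k * (F * ‖U i‖) := by
    intro i hi1 hiN
    have hsch := scheme i hi1 hiN (U i)
    rw [hb (U i) (U i), hQi i] at hsch
    have hinner : ⟪(1/k) • (U i - U (i-1)), U i⟫
        = (1/k) * (‖U i‖ ^ 2 - ⟪U (i-1), U i⟫) := by
      rw [real_inner_smul_left, inner_sub_left, real_inner_self_eq_norm_sq]
    rw [hinner] at hsch
    have hk0 : k ≠ 0 := ne_of_gt hk
    have h2 : ‖U i‖ ^ 2 - ⟪U (i-1), U i⟫
        = k * (⟪f i, U i⟫ - μ * a (U i) (U i) - a (Q i) (U i)) := by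
      field_simp at hsch
      linarith
    have hip : ⟪U (i-1), U i⟫ ≤ ‖U (i-1)‖ * ‖U i‖ := real_inner_le_norm _ _
    have hfU : ⟪f i, U i⟫ ≤ F * ‖U i‖ :=
      le_trans (real_inner_le_norm _ _)
        (mul_le_mul_of_nonneg_right (hf i hi1 hiN) (norm_nonneg _))
    have hfU2 : k * ⟪f i, U i⟫ ≤ k * (F * ‖U i‖) :=
      mul_le_mul_of_nonneg_left hfU hk.le
    linarith only [h2, hip, hfU2]
  -- weighted per-step inequality
  have hstep : ∀ i ∈ Finset.Icc 1 n,
      W i * ‖U i‖ ^ 2 + μ * y / 2 * k * (W i * a (U i) (U i)) + 2 * k * y * (W i * a (Q i) (U i))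
        ≤ W (i-1) * ‖U (i-1)‖ ^ 2 + k * (y * (x+1) * G) * W i := by
    intro i hi
    obtain ⟨hi1, hin⟩ := Finset.mem_Icc.mp hi
    have hiN : i ≤ N := le_trans hin hnN
    have hsc := step_scalar μ lam₁ k F x y (‖U (i-1)‖) (‖U i‖) (a (U i) (U i)) (a (Q i) (U i)) G
      hμ hlam₁ hk hF0 hx1.le hxy hαexp (norm_nonneg _) (norm_nonneg _) (hcoer (U i)) hG
      (hstar i hi1 hiN)
    have h3 := mul_le_mul_of_nonneg_left hsc (hWpos (i-1)).le
    have hwi : W i = x ^ 2 * W (i-1) := by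
      conv_lhs => rw [show i = (i-1)+1 from (Nat.succ_pred_eq_of_pos hi1).symm]
      rw [hWsucc]
    rw [hwi]
    have eR : W (i-1) * (‖U (i-1)‖ ^ 2 + k * (x * (x + 1) * G))
        = W (i-1) * ‖U (i-1)‖ ^ 2 + k * (y * (x+1) * G) * (x ^ 2 * W (i-1)) := by
      linear_combination (- k * (x+1) * G * x * W (i-1)) * hxy
    linarith only [h3, eR]
  -- memory positivity
  have hpos' : ∀ v : H, 0 ≤ a v v := fun v => le_trans (by positivity) (hcoer v)
  have hmem : 0 ≤ ∑ i ∈ Finset.Icc 1 n, W i * a (Q i) (U i) := by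
    set r : ℝ := Real.exp ((α - δ) * k) with hrdef
    have hr0 : 0 ≤ r := (Real.exp_pos _).le
    have hr1 : r ≤ 1 := by
      rw [hrdef]
      exact Real.exp_le_one_iff.mpr (mul_nonpos_of_nonpos_of_nonneg (by linarith) hk.le)
    set V : ℕ → H := fun j => Real.exp (α * ((j:ℝ) * k)) • U j with hVdef
    have hterm : ∀ i ∈ Finset.Icc 1 n, W i * a (Q i) (U i)
        = (k * γ) * (a (V i) (∑ j ∈ Finset.Icc 1 i, r ^ (i - j) • V j)) := by
      intro i hi
      have hQexp : a (Q i) (U i) = k * ∑ j ∈ Finset.Icc 1 i,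
          (γ * Real.exp (-δ * ((i:ℝ)*k - (j:ℝ)*k))) * a (U j) (U i) := by
        rw [← hQi i, map_smul, LinearMap.smul_apply, smul_eq_mul, map_sum, LinearMap.sum_apply]
        congr 1
        apply Finset.sum_congr rfl
        intro j hj
        rw [map_smul, LinearMap.smul_apply, smul_eq_mul]
      rw [hQexp, map_sum]
      simp only [Finset.mul_sum]
      apply Finset.sum_congr rfl
      intro j hj
      have hji : j ≤ i := (Finset.mem_Icc.mp hj).2
      have hrp : r ^ (i - j) = Real.exp ((α - δ) * k * ((i:ℝ) - (j:ℝ))) := by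
        rw [hrdef, ← Real.exp_nat_mul]
        congr 1
        rw [Nat.cast_sub hji]
        ring
      have hVV : a (V i) (V j)
          = Real.exp (α * ((i:ℝ)*k)) * (Real.exp (α * ((j:ℝ)*k)) * a (U i) (U j)) := by
        simp only [hVdef, map_smul, LinearMap.smul_apply, smul_eq_mul]
        ring
      have hsc : W i * Real.exp (-δ * ((i:ℝ)*k - (j:ℝ)*k))
          = r ^ (i - j) * (Real.exp (α * ((i:ℝ)*k)) * Real.exp (α * ((j:ℝ)*k))) := by
        rw [hrp]
        show Real.exp (2 * α * ((i:ℝ) * k)) * Real.exp (-δ * ((i:ℝ)*k - (j:ℝ)*k)) = _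
        rw [← Real.exp_add, ← Real.exp_add, ← Real.exp_add]
        congr 1
        ring
      rw [map_smul, smul_eq_mul, hVV, hsymm (U j) (U i)]
      linear_combination (k * γ * a (U i) (U j)) * hsc
    rw [Finset.sum_congr rfl hterm, ← Finset.mul_sum]
    exact mul_nonneg (mul_nonneg hk.le hγ.le) (psd_sum a hsymm hpos' r hr0 hr1 V n)
  -- geometric sum bound
  have hxp : (0:ℝ) < x + 1 := by linarith only [hx1]
  have hz1 : 1 < x ^ 2 := by nlinarith only [hx1]
  have hsumW : ∑ i ∈ Finset.Icc 1 n, W i ≤ (x^2)^(n+1) / (x^2 - 1) := by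
    calc ∑ i ∈ Finset.Icc 1 n, W i = ∑ i ∈ Finset.Icc 1 n, (x^2)^i :=
          Finset.sum_congr rfl (fun i _ => hWpow i)
    _ ≤ _ := geom_sum_le (x^2) hz1 n
  have hx2m1 : α * k * (x+1) ≤ x^2 - 1 := by
    have h1 : α * k + 1 ≤ x := by rw [hxdef]; exact Real.add_one_le_exp _
    nlinarith only [h1, hxp, hα0, hk, hx1]
  have hsrc : k * ∑ i ∈ Finset.Icc 1 n, W i ≤ x^2 * W n / (α * (x+1)) := by
    have h0 : 0 < α * k * (x+1) := by positivity
    have h2 : (x^2)^(n+1)/(x^2-1) ≤ (x^2)^(n+1)/(α*k*(x+1)) := by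
      rw [div_le_div_iff₀ (by linarith only [hz1]) h0]
      have hp : (0:ℝ) ≤ (x^2)^(n+1) := by positivity
      linarith only [mul_le_mul_of_nonneg_left hx2m1 hp]
    have h3 : k * ((x^2)^(n+1)/(α*k*(x+1))) = x^2 * W n / (α * (x+1)) := by
      rw [hWpow n, pow_succ]
      field_simp
    calc k * ∑ i ∈ Finset.Icc 1 n, W i ≤ k * ((x^2)^(n+1)/(x^2-1)) :=
          mul_le_mul_of_nonneg_left hsumW hk.le
    _ ≤ k * ((x^2)^(n+1)/(α*k*(x+1))) := mul_le_mul_of_nonneg_left h2 hk.le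
    _ = _ := h3
  -- sum the step inequalities
  have hsum := Finset.sum_le_sum hstep
  have hL1 : ∑ i ∈ Finset.Icc 1 n, (W i * ‖U i‖^2 + μ*y/2*k*(W i * a (U i) (U i))
        + 2*k*y*(W i * a (Q i) (U i)))
      = (∑ i ∈ Finset.Icc 1 n, W i * ‖U i‖^2)
        + μ*y/2*k * (∑ i ∈ Finset.Icc 1 n, W i * a (U i) (U i))
        + 2*k*y * (∑ i ∈ Finset.Icc 1 n, W i * a (Q i) (U i)) := by
    rw [Finset.sum_add_distrib, Finset.sum_add_distrib, Finset.mul_sum, Finset.mul_sum]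
  have hR1 : ∑ i ∈ Finset.Icc 1 n, (W (i-1) * ‖U (i-1)‖^2 + k*(y*(x+1)*G)*W i)
      = (∑ i ∈ Finset.Icc 1 n, W (i-1) * ‖U (i-1)‖^2)
        + k*(y*(x+1)*G) * ∑ i ∈ Finset.Icc 1 n, W i := by
    rw [Finset.sum_add_distrib, Finset.mul_sum]
  have htel : (∑ i ∈ Finset.Icc 1 n, W i * ‖U i‖^2)
        - ∑ i ∈ Finset.Icc 1 n, W (i-1) * ‖U (i-1)‖^2
      = W n * ‖U n‖^2 - W 0 * ‖U 0‖^2 := by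
    rw [← Finset.sum_sub_distrib]
    exact tele_sum (fun i => W i * ‖U i‖^2) n
  have hyx2 : y * x^2 = x := by linear_combination x*hxy
  have hsrc2 : k*(y*(x+1)*G) * ∑ i ∈ Finset.Icc 1 n, W i ≤ x * G / α * W n := by
    have h4 : k*(y*(x+1)*G) * ∑ i ∈ Finset.Icc 1 n, W i
        = (y*(x+1)*G) * (k * ∑ i ∈ Finset.Icc 1 n, W i) := by ring
    have h5 := mul_le_mul_of_nonneg_left hsrc (show (0:ℝ) ≤ y*(x+1)*G by positivity)
    have h6 : (y*(x+1)*G) * (x^2*W n/(α*(x+1))) = x*G/α*W n := by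
      have hα' : α ≠ 0 := ne_of_gt hα0
      have hxp' : x + 1 ≠ 0 := ne_of_gt hxp
      rw [show y*(x+1)*G*(x^2*W n/(α*(x+1))) = (y*x^2)*G*W n/α * ((x+1)/(x+1)) by rw [mul_comm α, ← div_div]; ring, div_self hxp', hyx2]
      ring
    linarith only [h4, h5, h6]
  have hW0E : W 0 * ‖U 0‖^2 = ‖U 0‖^2 := by rw [hW0]; ring
  have hmem2 : (0:ℝ) ≤ 2*k*y * ∑ i ∈ Finset.Icc 1 n, W i * a (Q i) (U i) :=
    mul_nonneg (by positivity) hmem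
  rw [hL1, hR1] at hsum
  have goal2 : W n * ‖U n‖^2
        + μ*y/2*k * (∑ i ∈ Finset.Icc 1 n, W i * a (U i) (U i))
      ≤ ‖U 0‖^2 + x*G/α * W n := by
    linarith only [hsum, htel, hsrc2, hmem2, hW0E]
  -- convert to the stated form
  have hSeq : ∑ i ∈ Finset.Icc 1 n, Real.exp (2*α*((i:ℝ)*k)) * a (U i) (U i)
      = ∑ i ∈ Finset.Icc 1 n, W i * a (U i) (U i) :=
    Finset.sum_congr rfl (fun i _ => by simp only [hWdef])
  have hWn1 : Real.exp (-2*α*((n:ℝ)*k)) * W n = 1 := by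
    show Real.exp (-2*α*((n:ℝ)*k)) * Real.exp (2*α*((n:ℝ)*k)) = 1
    rw [← Real.exp_add, show -2*α*((n:ℝ)*k) + 2*α*((n:ℝ)*k) = 0 from by ring, Real.exp_zero]
  have hGx : x/(α*μ*lam₁)*F^2 = x*G/α := by
    rw [← hG]
    have hα' : α ≠ 0 := ne_of_gt hα0
    have hμ' : μ ≠ 0 := ne_of_gt hμ
    have hl' : lam₁ ≠ 0 := ne_of_gt hlam₁
    field_simp
  apply le_of_mul_le_mul_right _ (hWpos n)
  rw [hSeq]
  have eqL : (‖U n‖^2 + μ/2*y*Real.exp (-2*α*((n:ℝ)*k))*k*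
        (∑ i ∈ Finset.Icc 1 n, W i * a (U i) (U i))) * W n
      = W n * ‖U n‖^2 + μ*y/2*k*(∑ i ∈ Finset.Icc 1 n, W i * a (U i) (U i)) := by
    linear_combination (μ/2*y*k*(∑ i ∈ Finset.Icc 1 n, W i * a (U i) (U i))) * hWn1
  have eqR : (Real.exp (-2*α*((n:ℝ)*k)) * ‖U 0‖^2 + x/(α*μ*lam₁)*F^2) * W n
      = ‖U 0‖^2 + x*G/α*W n := by
    rw [hGx]; linear_combination (‖U 0‖^2) * hWn1
  linarith only [goal2, eqL, eqR]
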